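/- arXiv:2206.10584 — 3 statements merged into one kernel-verified Lean document; each statement's English description precedes it below -/
import Mathlib

section
/- Let $S$ be a commutative ring, $R$ an $S$-module, and let $\mu_1, \mu_2 : R \times R \to R$ be two $S$-bilinear associative multiplications on $R$. Let $T : R \to S$ be an $S$-linear map. Assume: (i) $T(\mu_1(x,y)) = T(\mu_2(x,y))$ for all $x, y \in R$ (equal $2$-point functions); (ii) $T(\mu_1(x,\mu_1(y,z))) = T(\mu_2(x,\mu_2(y,z)))$ for all $x, y, z \in R$ (equal $3$-point functions); (iii) the trace pairing of $\mu_1$ is non-degenerate, i.e. if $w \in R$ satisfies $T(\mu_1(w,z)) = 0$ for all $z \in R$, then $w = 0$. Then $\mu_1 = \mu_2$. -/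
/-- Abstract uniqueness step of the Frobenius structure conjecture (Theorem 3.1):
an associative `S`-bilinear product on a module is uniquely determined by its
2-point and 3-point trace functions once the trace pairing is non-degenerate. -/
theorem product_unique_from_two_and_three_point_functions
    {S R : Type*} [CommRing S] [AddCommGroup R] [Module S R]
    (μ₁ μ₂ : R →ₗ[S] R →ₗ[S] R)
    (hassoc₁ : ∀ x y z : R, μ₁ (μ₁ x y) z = μ₁ x (μ₁ y z))
    (hassoc₂ : ∀ x y z : R, μ₂ (μ₂ x y) z = μ₂ x (μ₂ y z))
    (T : R →ₗ[S] S)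
    (h2pt : ∀ x y : R, T (μ₁ x y) = T (μ₂ x y))
    (h3pt : ∀ x y z : R, T (μ₁ x (μ₁ y z)) = T (μ₂ x (μ₂ y z)))
    (hnd : ∀ w : R, (∀ z : R, T (μ₁ w z) = 0) → w = 0) :
    μ₁ = μ₂ := by
  ext x y
  have h : μ₁ x y - μ₂ x y = 0 := by
    apply hnd
    intro z
    have : T (μ₁ (μ₁ x y) z) = T (μ₁ (μ₂ x y) z) := by
      rw [hassoc₁, h3pt, ← hassoc₂, ← h2pt]
    simp [map_sub, LinearMap.sub_apply, this]
  exact sub_eq_zero.mp h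
end

section
/- Let $A$ be a commutative ring and $J \subseteq A$ an ideal such that $\bigcap_{k \geq 1} J^k = 0$. Let $G$ be an additive abelian group and $F = \bigoplus_{g \in G} A$ the free $A$-module with basis $(e_g)_{g \in G}$ (finitely supported functions $G \to A$). Let $B : F \times F \to A$ be an $A$-bilinear form and $(c_g)_{g \in G}$ a family of elements of $A$ such that: (i) $B(e_g, e_h) \in J$ whenever $g + h \neq 0$; (ii) $B(e_g, e_{-g}) - c_g \in J$ for all $g \in G$; (iii) for every $k \geq 1$ and every $g \in G$, multiplication by $c_g$ is injective on $A/J^k$, i.e. if $a \in A$ and $c_g \cdot a \in J^k$ then $a \in J^k$. Then $B$ is non-degenerate in its first argument: for every nonzero $x \in F$ there exists $g \in G$ with $B(x, e_g) \neq 0$. -/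
/-- Abstract non-degeneracy of the trace pairing (proof of Theorem 3.1):
given a bilinear form on a free module which, modulo an ideal `J` with
`⋂ₖ Jᵏ = 0`, pairs basis elements `e_g, e_h` trivially unless `g + h = 0`,
and pairs `e_g` with `e_{-g}` as an element `c_g` which is a non-zerodivisor
modulo each `Jᵏ`, the form is non-degenerate in its first argument. -/
theorem trace_pairing_nondegenerate
    {A : Type*} [CommRing A] (J : Ideal A)
    (hJ : ∀ a : A, (∀ k : ℕ, 1 ≤ k → a ∈ J ^ k) → a = 0)
    {G : Type*} [AddCommGroup G]
    (B : (G →₀ A) →ₗ[A] (G →₀ A) →ₗ[A] A)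
    (c : G → A)
    (h1 : ∀ g h : G, g + h ≠ 0 → B (Finsupp.single g 1) (Finsupp.single h 1) ∈ J)
    (h2 : ∀ g : G, B (Finsupp.single g 1) (Finsupp.single (-g) 1) - c g ∈ J)
    (h3 : ∀ k : ℕ, 1 ≤ k → ∀ g : G, ∀ a : A, c g * a ∈ J ^ k → a ∈ J ^ k)
    (x : G →₀ A) (hx : x ≠ 0) :
    ∃ g : G, B x (Finsupp.single g 1) ≠ 0 := by
  classical
  by_contra hcon
  push_neg at hcon
  have hBx : ∀ y : G →₀ A, B x y = ∑ h ∈ x.support, x h * B (Finsupp.single h 1) y := by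
    intro y
    conv_lhs => rw [← x.sum_single]
    rw [Finsupp.sum, map_sum, LinearMap.coe_sum, Finset.sum_apply]
    refine Finset.sum_congr rfl fun h _ => ?_
    rw [← Finsupp.smul_single_one h (x h), map_smul]
    rfl
  have key : ∀ k : ℕ, ∀ g : G, x g ∈ J ^ k := by
    intro k
    induction k with
    | zero => intro g; simp only [pow_zero, Ideal.one_eq_top]; exact Submodule.mem_top
    | succ k ih =>
      intro g
      by_cases hg : g ∈ x.support
      · apply h3 (k+1) (by omega) g
        have hsum : (0:A) = ∑ h ∈ x.support, x h * B (Finsupp.single h 1) (Finsupp.single (-g) 1) := by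
          rw [← hBx, hcon]
        rw [← Finset.add_sum_erase _ _ hg] at hsum
        have heq : c g * x g =
            -(∑ h ∈ x.support.erase g, x h * B (Finsupp.single h 1) (Finsupp.single (-g) 1))
            - (B (Finsupp.single g 1) (Finsupp.single (-g) 1) - c g) * x g := by
          linear_combination -hsum
        rw [heq]
        apply sub_mem
        · apply neg_mem
          apply Ideal.sum_mem
          intro h hh
          have hne : h + (-g) ≠ 0 := by
            intro habs
            exact (Finset.ne_of_mem_erase hh) (by rwa [← sub_eq_add_neg, sub_eq_zero] at habs)
          rw [pow_succ]
          exact Ideal.mul_mem_mul (ih h) (h1 h (-g) hne)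
        · rw [pow_succ']
          exact Ideal.mul_mem_mul (h2 g) (ih g)
      · simp [Finsupp.notMem_support_iff.mp hg]
  have : x = 0 := by
    ext g
    exact hJ (x g) (fun k hk => key k g)
  exact hx this
end

section
/- Let $A$ be a commutative ring, $J \subseteq A$ an ideal with $\bigcap_{k \geq 1} J^k = 0$, $G$ an additive abelian group, and $R = \bigoplus_{g \in G} A$ the free $A$-module with basis $(\vartheta_g)_{g \in G}$. Let $T : R \to A$ be the $A$-linear map sending $\sum_g a_g \vartheta_g$ to $a_0$. Let $\mu$ be an associative $A$-bilinear product on $R$ and $(c_g)_{g \in G}$ a family of elements of $A$ such that: (i) $T(\mu(\vartheta_g, \vartheta_h)) \in J$ whenever $g + h \neq 0$; (ii) $T(\mu(\vartheta_g, \vartheta_{-g})) - c_g \in J$ for all $g$; (iii) for every $k \geq 1$ and every $g \in G$, multiplication by $c_g$ is injective on $A/J^k$. Then $\mu$ is the unique associative $A$-bilinear product on $R$ with its $2$-point and $3$-point trace functions: if $\mu'$ is any associative $A$-bilinear product on $R$ with $T(\mu'(x,y)) = T(\mu(x,y))$ for all $x, y \in R$ and $T(\mu'(x,\mu'(y,z)))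 = T(\mu(x,\mu(y,z)))$ for all $x, y, z \in R$, then $\mu' = \mu$. -/
/-- Abstract formulation of Theorem 3.1 (thm_frob_unique): the product structure on the
algebra of theta functions is uniquely determined by the values of the trace map (the
projection `T` onto the coefficient of `ϑ₀`, i.e. `x ↦ x 0`) on products of two and three
theta functions.  Here `R = ⊕_{g ∈ G} A` is the free module on basis `(ϑ_g) = (single g 1)`,
`J` is an ideal of `A` with `⋂ₖ Jᵏ = 0`, and the product `μ` pairs `ϑ_g` with `ϑ_h`
trivially mod `J` unless `g + h = 0`, in which case the trace is `c_g` mod `J`, with each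
`c_g` a non-zerodivisor modulo every `Jᵏ`. -/
theorem theta_product_unique_from_trace
    {A : Type*} [CommRing A] (J : Ideal A)
    (hJ : ∀ a : A, (∀ k : ℕ, 1 ≤ k → a ∈ J ^ k) → a = 0)
    {G : Type*} [AddCommGroup G]
    (μ : (G →₀ A) →ₗ[A] (G →₀ A) →ₗ[A] (G →₀ A))
    (hassoc : ∀ x y z : G →₀ A, μ (μ x y) z = μ x (μ y z))
    (c : G → A)
    (h1 : ∀ g h : G, g + h ≠ 0 → (μ (Finsupp.single g 1) (Finsupp.single h 1)) 0 ∈ J)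
    (h2 : ∀ g : G, (μ (Finsupp.single g 1) (Finsupp.single (-g) 1)) 0 - c g ∈ J)
    (h3 : ∀ k : ℕ, 1 ≤ k → ∀ g : G, ∀ a : A, c g * a ∈ J ^ k → a ∈ J ^ k)
    (μ' : (G →₀ A) →ₗ[A] (G →₀ A) →ₗ[A] (G →₀ A))
    (hassoc' : ∀ x y z : G →₀ A, μ' (μ' x y) z = μ' x (μ' y z))
    (h2pt : ∀ x y : G →₀ A, (μ' x y) 0 = (μ x y) 0)
    (h3pt : ∀ x y z : G →₀ A, (μ' x (μ' y z)) 0 = (μ x (μ y z)) 0) :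
    μ' = μ := by
  classical
  -- Key lemma: if all "traces against theta functions" of D vanish, then D = 0.
  have key : ∀ D : G →₀ A, (∀ f : G, (μ (Finsupp.single f 1) D) 0 = 0) → D = 0 := by
    intro D hD
    have hexp : ∀ f : G,
        ∑ n ∈ D.support, D n * (μ (Finsupp.single f 1) (Finsupp.single n 1)) 0 = 0 := by
      intro f
      have : (μ (Finsupp.single f 1) D) 0
          = ∑ n ∈ D.support, D n * (μ (Finsupp.single f 1) (Finsupp.single n 1)) 0 := by
        conv_lhs => rw [← Finsupp.sum_single D]
        rw [map_finsuppSum, Finsupp.sum_apply, Finsupp.sum]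
        refine Finset.sum_congr rfl fun n hn => ?_
        have h : Finsupp.single n (D n) = D n • Finsupp.single n (1:A) := by
          rw [Finsupp.smul_single', mul_one]
        rw [h, map_smul, Finsupp.smul_apply, smul_eq_mul]
      rw [← this, hD f]
    have hstep : ∀ k : ℕ, (∀ m : G, D m ∈ J ^ k) → ∀ m : G, D m ∈ J ^ (k+1) := by
      intro k hk m
      have hins : ∑ n ∈ insert m D.support,
          D n * (μ (Finsupp.single (-m) 1) (Finsupp.single n 1)) 0 = 0 := by
        by_cases hm : m ∈ D.support
        · rw [Finset.insert_eq_self.mpr hm]; exact hexp (-m)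
        · rw [Finset.sum_insert hm, Finsupp.notMem_support_iff.mp hm, zero_mul, zero_add]
          exact hexp (-m)
      rw [← Finset.add_sum_erase _ _ (Finset.mem_insert_self m D.support),
        Finset.erase_insert_eq_erase] at hins
      have heq : c (-m) * D m
          = -(D m * ((μ (Finsupp.single (-m) 1) (Finsupp.single m 1)) 0 - c (-m))
            + ∑ n ∈ D.support.erase m,
                D n * (μ (Finsupp.single (-m) 1) (Finsupp.single n 1)) 0) := by
        linear_combination hins
      have hmem : c (-m) * D m ∈ J ^ (k+1) := by
        rw [heq]
        refine neg_mem (add_mem ?_ (Ideal.sum_mem _ ?_))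
        · rw [pow_succ]
          refine Ideal.mul_mem_mul (hk m) ?_
          have := h2 (-m)
          rwa [neg_neg] at this
        · intro n hn
          rw [pow_succ]
          refine Ideal.mul_mem_mul (hk n) (h1 (-m) n ?_)
          intro h0
          exact (Finset.ne_of_mem_erase hn) (neg_add_eq_zero.mp h0).symm
      exact h3 (k+1) (Nat.le_add_left 1 k) (-m) (D m) hmem
    have hpow : ∀ k : ℕ, ∀ m : G, D m ∈ J ^ k := by
      intro k
      induction k with
      | zero => intro m; simp
      | succ k ih => exact hstep k ih
    ext m
    exact hJ (D m) fun k _ => hpow k m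
  ext g h
  have hD : ∀ f : G, (μ (Finsupp.single f 1)
      (μ' (Finsupp.single g 1) (Finsupp.single h 1)
        - μ (Finsupp.single g 1) (Finsupp.single h 1))) 0 = 0 := by
    intro f
    rw [map_sub, Finsupp.sub_apply]
    rw [← h2pt (Finsupp.single f 1) (μ' (Finsupp.single g 1) (Finsupp.single h 1)),
      h3pt, sub_self]
  have := key _ hD
  have h0 : μ' (Finsupp.single g 1) (Finsupp.single h 1)
      = μ (Finsupp.single g 1) (Finsupp.single h 1) := sub_eq_zero.mp this
  simp only [LinearMap.coe_comp, Function.comp_apply, Finsupp.lsingle_apply]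
  rw [h0]
end
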